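/- Let V be a standard value-function candidate. Then C is right-open: for every x ∈ C there exists h > 0 such that [x, x+h) ⊆ C. -/

import Mathlib

open MeasureTheory Set Filter

noncomputable section

/-- Drift coefficient: c(x) = p + r x for x ≥ 0, c(x) = p + α x for x < 0. -/
def drift (p r a x : ℝ) : ℝ := if 0 ≤ x then p + r * x else p + a * x

/-- I_v(x) = ∫_{(0, x+p/α]} v(x−u) dμ(u). -/
def Iop (p a : ℝ) (mu : Measure ℝ) (v : ℝ → ℝ) (x : ℝ) : ℝ :=
  ∫ u in Set.Ioc (0 : ℝ) (x + p / a), v (x - u) ∂mu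

/-- L_{v,φ}(x) = c(x)·φ′(x) − (λ+δ)·v(x) + λ·I_v(x). -/
def Lphi (p lam d r a : ℝ) (mu : Measure ℝ) (v phi : ℝ → ℝ) (x : ℝ) : ℝ :=
  drift p r a x * deriv phi x - (lam + d) * v x + lam * Iop p a mu v x

/-- G_v(x) = c(x) − (λ+δ)·v(x) + λ·I_v(x). -/
def Gop (p lam d r a : ℝ) (mu : Measure ℝ) (v : ℝ → ℝ) (x : ℝ) : ℝ :=
  drift p r a x - (lam + d) * v x + lam * Iop p a mu v x

/-- Viscosity sub-solution of the HJB equation on J ⊆ (−p/α,∞). -/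
def IsViscSubsol (p lam d r a : ℝ) (mu : Measure ℝ) (u : ℝ → ℝ) (J : Set ℝ) : Prop :=
  ∀ x ∈ J, ∀ phi : ℝ → ℝ, ContDiff ℝ 1 phi → phi x = u x →
    (∀ y ∈ Set.Ici (-(p / a)), u y - phi y ≤ u x - phi x) →
    0 ≤ max (1 - deriv phi x) (Lphi p lam d r a mu u phi x)

/-- Viscosity super-solution of the HJB equation on J ⊆ (−p/α,∞). -/
def IsViscSupersol (p lam d r a : ℝ) (mu : Measure ℝ) (u : ℝ → ℝ) (J : Set ℝ) : Prop :=
  ∀ x ∈ J, ∀ phi : ℝ → ℝ, ContDiff ℝ 1 phi → phi x = u x →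
    (∀ y ∈ Set.Ici (-(p / a)), u x - phi x ≤ u y - phi y) →
    max (1 - deriv phi x) (Lphi p lam d r a mu u phi x) ≤ 0

/-- Viscosity solution: both sub- and super-solution. -/
def IsViscSol (p lam d r a : ℝ) (mu : Measure ℝ) (u : ℝ → ℝ) (J : Set ℝ) : Prop :=
  IsViscSubsol p lam d r a mu u J ∧ IsViscSupersol p lam d r a mu u J

/-- Locally Lipschitz on a set. -/
def LocLipOn (s : Set ℝ) (u : ℝ → ℝ) : Prop :=
  ∀ x ∈ s, ∃ K : NNReal, ∃ eps : ℝ, 0 < eps ∧ LipschitzOnWith K u (s ∩ Metric.ball x eps)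

/-- Linear growth bound on [−p/α,∞). -/
def LinGrowth (p a : ℝ) (u : ℝ → ℝ) : Prop :=
  ∃ c₁ c₂ : ℝ, ∀ x : ℝ, -(p / a) ≤ x → u x ≤ c₁ * x + c₂

/-- Standard value-function candidate. -/
structure IsCandidate (p lam d r a : ℝ) (mu : Measure ℝ) (V : ℝ → ℝ) : Prop where
  cont : ContinuousOn V (Set.Ici (-(p / a)))
  nonneg : ∀ x ∈ Set.Ici (-(p / a)), 0 ≤ V x
  mono : MonotoneOn V (Set.Ici (-(p / a)))
  boundary : V (-(p / a)) = 0
  slope : ∀ x y : ℝ, -(p / a) ≤ x → x ≤ y → y - x ≤ V y - V x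
  growth : ∀ x : ℝ, 0 ≤ x → V x ≤ (d * x + p) / (d - r) + p / a
  locLip : LocLipOn (Set.Ioi (-(p / a))) V
  visc : IsViscSol p lam d r a mu V (Set.Ioi (-(p / a)))
  derivLim : ∀ x ∈ Set.Ioi (-(p / a)), ∀ (h : ℕ → ℝ) (dd : ℝ),
      ((∀ n, 0 < h n) ∨ (∀ n, h n < 0)) →
      Filter.Tendsto h Filter.atTop (nhds 0) →
      Filter.Tendsto (fun n => (V (x + h n) - V x) / h n) Filter.atTop (nhds dd) →
      1 ≤ dd ∧ dd * drift p r a x - (lam + d) * V x + lam * Iop p a mu V x ≤ 0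

/-- The set A = {x ∈ [−p/α,∞) : G_V(x) = 0}. -/
def setA (p lam d r a : ℝ) (mu : Measure ℝ) (V : ℝ → ℝ) : Set ℝ :=
  {x | x ∈ Set.Ici (-(p / a)) ∧ Gop p lam d r a mu V x = 0}

/-- The set B = {x ∈ [−p/α,∞) : V′(x) exists, V′(x) = 1 and G_V(x) < 0}. -/
def setB (p lam d r a : ℝ) (mu : Measure ℝ) (V : ℝ → ℝ) : Set ℝ :=
  {x | x ∈ Set.Ici (-(p / a)) ∧ DifferentiableAt ℝ V x ∧ deriv V x = 1 ∧
      Gop p lam d r a mu V x < 0}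

/-- The set C = [−p/α,∞) \ (A ∪ B). -/
def setC (p lam d r a : ℝ) (mu : Measure ℝ) (V : ℝ → ℝ) : Set ℝ :=
  Set.Ici (-(p / a)) \ (setA p lam d r a mu V ∪ setB p lam d r a mu V)

open Topology

lemma drift_le_abs {p r a : ℝ} (hr : 0 < r) (hra : r < a) (y : ℝ) :
    drift p r a y ≤ p + a * |y| := by
  have ha : 0 < a := hr.trans hra
  unfold drift; split_ifs with h
  · have h1 : r * y ≤ a * |y| := by
      rw [abs_of_nonneg h]; exact mul_le_mul_of_nonneg_right hra.le h
    linarith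
  · push_neg at h
    have h1 : a * y ≤ a * |y| := mul_le_mul_of_nonneg_left (le_abs_self y) ha.le
    linarith

lemma drift_pos {p r a x : ℝ} (hp : 0 < p) (hr : 0 < r) (hra : r < a)
    (hx : -(p / a) < x) : 0 < drift p r a x := by
  have ha : 0 < a := hr.trans hra
  unfold drift; split_ifs with h
  · nlinarith
  · push_neg at h
    have h1 : a * (x + p / a) = a * x + p := by field_simp
    nlinarith [mul_pos ha (show (0:ℝ) < x + p / a by linarith)]

lemma drift_lip {p r a : ℝ} (hr : 0 < r) (hra : r < a) (x y : ℝ) :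
    |drift p r a y - drift p r a x| ≤ a * |y - x| := by
  have ha : 0 < a := hr.trans hra
  unfold drift
  rcases le_or_gt 0 y with hy | hy <;> rcases le_or_gt 0 x with hx | hx
  · rw [if_pos hy, if_pos hx]
    have : (p + r * y) - (p + r * x) = r * (y - x) := by ring
    rw [this, abs_mul, abs_of_pos hr]
    exact mul_le_mul_of_nonneg_right hra.le (abs_nonneg _)
  · rw [if_pos hy, if_neg (not_le.mpr hx), abs_of_nonneg (by linarith : (0:ℝ) ≤ y - x)]
    rw [abs_le]; constructor <;> nlinarith
  · rw [if_neg (not_le.mpr hy), if_pos hx, abs_of_nonpos (by linarith : y - x ≤ 0)]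
    rw [abs_le]; constructor <;> nlinarith
  · rw [if_neg (not_le.mpr hy), if_neg (not_le.mpr hx)]
    have : (p + a * y) - (p + a * x) = a * (y - x) := by ring
    rw [this, abs_mul, abs_of_pos ha]


lemma candidate_linear_bound {p lam d r a : ℝ} {mu : Measure ℝ} {V : ℝ → ℝ}
    (hp : 0 < p) (hd : 0 < d) (hr : 0 < r) (hra : r < a) (hrd : r < d)
    (hV : IsCandidate p lam d r a mu V) :
    ∀ y, -(p / a) ≤ y →
      V y ≤ (d / (d - r)) * y + (p / (d - r) + p / a + (d / (d - r)) * (p / a)) := by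
  have ha : 0 < a := hr.trans hra
  have hdr : 0 < d - r := by linarith
  have hC1 : 0 ≤ d / (d - r) := le_of_lt (div_pos hd hdr)
  have hba : 0 ≤ p / a := le_of_lt (div_pos hp ha)
  intro y hy
  rcases le_or_gt 0 y with h0 | h0
  · have hg := hV.growth y h0
    have he : (d * y + p) / (d - r) = (d / (d - r)) * y + p / (d - r) := by
      field_simp
    nlinarith [mul_nonneg hC1 hba]
  · have h1 : V y ≤ V 0 := hV.mono hy (by simpa using hba) h0.le
    have h2 := hV.growth 0 le_rfl
    have h3 : (d * 0 + p) / (d - r) = p / (d - r) := by ring_nf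
    have h4 : (d / (d - r)) * (-(p/a)) ≤ (d / (d - r)) * y :=
      mul_le_mul_of_nonneg_left hy hC1
    nlinarith

lemma V_integrableOn {p a : ℝ} {mu : Measure ℝ} [IsProbabilityMeasure mu] {V : ℝ → ℝ}
    (hcont : ContinuousOn V (Set.Ici (-(p / a)))) {z : ℝ} (hz : -(p / a) ≤ z)
    {s : Set ℝ} (hs : s ⊆ Set.Icc 0 (z + p / a)) :
    MeasureTheory.IntegrableOn (fun u => V (z - u)) s mu := by
  have h1 : MeasureTheory.IntegrableOn (fun u => V (z - u)) (Set.Icc 0 (z + p / a)) mu := by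
    apply ContinuousOn.integrableOn_compact isCompact_Icc
    apply hcont.comp (Continuous.continuousOn (by continuity))
    intro u hu
    simp only [Set.mem_Icc] at hu
    simp only [Set.mem_Ici]
    linarith [hu.2]
  exact h1.mono_set hs

lemma Iop_diff_bound {p a : ℝ} {mu : Measure ℝ} [IsProbabilityMeasure mu] {V : ℝ → ℝ}
    (hcont : ContinuousOn V (Set.Ici (-(p / a))))
    (hnonneg : ∀ x ∈ Set.Ici (-(p / a)), 0 ≤ V x)
    {z w T : ℝ} (hz : -(p / a) < z) (hzw : z ≤ w) (hwT : w ≤ T)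
    {e1 e2 : ℝ} (he1 : 0 ≤ e1) (he2 : 0 ≤ e2)
    (hUC : ∀ s t, s ∈ Set.Icc (-(p / a)) T → t ∈ Set.Icc (-(p / a)) T →
        |s - t| ≤ w - z → |V s - V t| ≤ e1)
    (hB : ∀ y, -(p / a) ≤ y → y ≤ -(p / a) + (w - z) → V y ≤ e2) :
    |Iop p a mu V w - Iop p a mu V z| ≤ e1 + e2 := by
  have hzb : (0:ℝ) < z + p / a := by linarith
  have hsub1 : Set.Ioc (0:ℝ) (z + p / a) ⊆ Set.Icc 0 (w + p / a) := fun u hu =>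
    ⟨hu.1.le, hu.2.trans (by linarith)⟩
  have hsub2 : Set.Ioc (z + p / a) (w + p / a) ⊆ Set.Icc 0 (w + p / a) := fun u hu =>
    ⟨le_trans hzb.le hu.1.le, hu.2⟩
  have hwz : -(p / a) ≤ w := by linarith
  have int1 : MeasureTheory.IntegrableOn (fun u => V (w - u)) (Set.Ioc 0 (z + p / a)) mu :=
    V_integrableOn hcont hwz hsub1
  have int2 : MeasureTheory.IntegrableOn (fun u => V (w - u)) (Set.Ioc (z + p / a) (w + p / a)) mu :=
    V_integrableOn hcont hwz hsub2
  have intz : MeasureTheory.IntegrableOn (fun u => V (z - u)) (Set.Ioc 0 (z + p / a)) mu :=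
    V_integrableOn hcont hz.le (fun u hu => ⟨hu.1.le, hu.2⟩)
  have hsplit : Set.Ioc (0:ℝ) (w + p / a) =
      Set.Ioc (0:ℝ) (z + p / a) ∪ Set.Ioc (z + p / a) (w + p / a) :=
    (Set.Ioc_union_Ioc_eq_Ioc hzb.le (by linarith)).symm
  have hIw : Iop p a mu V w = (∫ u in Set.Ioc (0:ℝ) (z + p / a), V (w - u) ∂mu)
      + ∫ u in Set.Ioc (z + p / a) (w + p / a), V (w - u) ∂mu := by
    unfold Iop
    rw [hsplit]
    exact MeasureTheory.setIntegral_union (Set.Ioc_disjoint_Ioc_of_le le_rfl) measurableSet_Ioc int1 int2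
  have hdiff : Iop p a mu V w - Iop p a mu V z =
      (∫ u in Set.Ioc (0:ℝ) (z + p / a), (V (w - u) - V (z - u)) ∂mu)
      + ∫ u in Set.Ioc (z + p / a) (w + p / a), V (w - u) ∂mu := by
    rw [hIw]
    unfold Iop
    rw [MeasureTheory.integral_sub int1 intz]
    ring
  have hmeas1 : (mu (Set.Ioc (0:ℝ) (z + p / a))).toReal ≤ 1 := by
    rw [show (1:ℝ) = (1:ENNReal).toReal by simp]
    exact ENNReal.toReal_mono (by simp) (prob_le_one)
  have hmeas2 : (mu (Set.Ioc (z + p / a) (w + p / a))).toReal ≤ 1 := by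
    rw [show (1:ℝ) = (1:ENNReal).toReal by simp]
    exact ENNReal.toReal_mono (by simp) (prob_le_one)
  have hb1 : |∫ u in Set.Ioc (0:ℝ) (z + p / a), (V (w - u) - V (z - u)) ∂mu| ≤ e1 := by
    have := MeasureTheory.norm_setIntegral_le_of_norm_le_const
      (μ := mu) (s := Set.Ioc (0:ℝ) (z + p / a))
      (f := fun u => V (w - u) - V (z - u)) (C := e1)
      (measure_lt_top mu _) ?_
    · rw [Real.norm_eq_abs] at this
      calc |∫ u in Set.Ioc (0:ℝ) (z + p / a), (V (w - u) - V (z - u)) ∂mu|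
          ≤ e1 * (mu (Set.Ioc (0:ℝ) (z + p / a))).toReal := this
        _ ≤ e1 * 1 := mul_le_mul_of_nonneg_left hmeas1 he1
        _ = e1 := mul_one e1
    · intro u hu
      rw [Real.norm_eq_abs]
      apply hUC
      · constructor <;> [linarith [hu.2]; linarith [hu.1]]
      · constructor <;> [linarith [hu.2]; linarith [hu.1]]
      · have : w - u - (z - u) = w - z := by ring
        rw [this, abs_of_nonneg (by linarith)]
  have hb2 : |∫ u in Set.Ioc (z + p / a) (w + p / a), V (w - u) ∂mu| ≤ e2 := by
    have := MeasureTheory.norm_setIntegral_le_of_norm_le_const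
      (μ := mu) (s := Set.Ioc (z + p / a) (w + p / a))
      (f := fun u => V (w - u)) (C := e2)
      (measure_lt_top mu _) ?_
    · rw [Real.norm_eq_abs] at this
      calc |∫ u in Set.Ioc (z + p / a) (w + p / a), V (w - u) ∂mu|
          ≤ e2 * (mu (Set.Ioc (z + p / a) (w + p / a))).toReal := this
        _ ≤ e2 * 1 := mul_le_mul_of_nonneg_left hmeas2 he2
        _ = e2 := mul_one e2
    · intro u hu
      have hm : -(p / a) ≤ w - u := by linarith [hu.2]
      rw [Real.norm_eq_abs, abs_of_nonneg (hnonneg _ hm)]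
      exact hB _ hm (by linarith [hu.1])
  calc |Iop p a mu V w - Iop p a mu V z|
      ≤ |∫ u in Set.Ioc (0:ℝ) (z + p / a), (V (w - u) - V (z - u)) ∂mu|
        + |∫ u in Set.Ioc (z + p / a) (w + p / a), V (w - u) ∂mu| := by
        rw [hdiff]; exact abs_add_le _ _
    _ ≤ e1 + e2 := add_le_add hb1 hb2

lemma Gop_boundary {p lam d r a : ℝ} {mu : Measure ℝ} {V : ℝ → ℝ}
    (hp : 0 < p) (hr : 0 < r) (hra : r < a)
    (hV : IsCandidate p lam d r a mu V) :
    Gop p lam d r a mu V (-(p / a)) = 0 := by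
  have ha : 0 < a := hr.trans hra
  have hba : 0 < p / a := div_pos hp ha
  unfold Gop Iop drift
  rw [if_neg (by linarith), hV.boundary]
  rw [show -(p / a) + p / a = 0 by ring, Set.Ioc_self]
  simp only [MeasureTheory.Measure.restrict_empty, MeasureTheory.integral_zero_measure]
  field_simp
  ring

lemma Gop_nonpos {p lam d r a : ℝ} {mu : Measure ℝ} {V : ℝ → ℝ}
    (hp : 0 < p) (hr : 0 < r) (hra : r < a)
    (hV : IsCandidate p lam d r a mu V) {x : ℝ} (hx : -(p / a) < x) :
    Gop p lam d r a mu V x ≤ 0 := by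
  obtain ⟨K, eps, heps, hlip⟩ := hV.locLip x hx
  set e0 : ℝ := eps / 2 with he0
  have he0pos : 0 < e0 := by positivity
  set h0 : ℕ → ℝ := fun n => e0 / (n + 1) with hh0
  have hpos : ∀ n, 0 < h0 n := fun n => by positivity
  have hlt : ∀ n, h0 n < eps := fun n => by
    have h1 : h0 n ≤ e0 := by
      rw [hh0]
      apply div_le_self he0pos.le
      have : (0:ℝ) ≤ (n:ℝ) := Nat.cast_nonneg n
      linarith
    linarith
  have hmemx : x ∈ Set.Ioi (-(p / a)) ∩ Metric.ball x eps := by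
    constructor
    · exact hx
    · simp [Metric.mem_ball, heps]
  have hmem : ∀ n, x + h0 n ∈ Set.Ioi (-(p / a)) ∩ Metric.ball x eps := fun n => by
    constructor
    · simp only [Set.mem_Ioi]; linarith [hpos n]
    · simp only [Metric.mem_ball, Real.dist_eq]
      rw [show x + h0 n - x = h0 n by ring, abs_of_pos (hpos n)]
      exact hlt n
  set q : ℕ → ℝ := fun n => (V (x + h0 n) - V x) / h0 n with hq
  have hqmem : ∀ n, q n ∈ Set.Icc (-(K:ℝ)) (K:ℝ) := fun n => by
    have hd := hlip.dist_le_mul _ (hmem n) _ hmemx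
    rw [Real.dist_eq, Real.dist_eq, show x + h0 n - x = h0 n by ring,
      abs_of_pos (hpos n)] at hd
    have h2 : |q n| ≤ (K:ℝ) := by
      rw [hq]
      rw [abs_div, abs_of_pos (hpos n)]
      rw [div_le_iff₀ (hpos n)]
      exact hd
    exact abs_le.mp h2
  obtain ⟨dd, -, phi, hphi, htend⟩ :=
    tendsto_subseq_of_bounded (Metric.isBounded_Icc (-(K:ℝ)) (K:ℝ)) hqmem
  have ht0 : Tendsto h0 atTop (𝓝 0) := by
    have := tendsto_one_div_add_atTop_nhds_zero_nat.const_mul e0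
    simpa [hh0, mul_one_div, div_eq_mul_inv] using this
  have ht0' : Tendsto (fun n => h0 (phi n)) atTop (𝓝 0) :=
    ht0.comp hphi.tendsto_atTop
  have hqt : Tendsto (fun n => (V (x + h0 (phi n)) - V x) / h0 (phi n)) atTop (𝓝 dd) := htend
  obtain ⟨h1dd, h2dd⟩ := hV.derivLim x hx (fun n => h0 (phi n)) dd
    (Or.inl fun n => hpos (phi n)) ht0' hqt
  have hdp : 0 < drift p r a x := drift_pos hp hr hra hx
  unfold Gop
  nlinarith [mul_nonneg (sub_nonneg.mpr h1dd) hdp.le]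

lemma Gop_near {p lam d r a : ℝ} {mu : Measure ℝ} [IsProbabilityMeasure mu] {V : ℝ → ℝ}
    (hp : 0 < p) (hlam : 0 < lam) (hd : 0 < d) (hr : 0 < r) (hra : r < a)
    (hV : IsCandidate p lam d r a mu V) {x : ℝ} (hx : -(p / a) < x)
    {eps : ℝ} (heps : 0 < eps) :
    ∃ η : ℝ, 0 < η ∧ -(p / a) < x - η ∧ η ≤ 1 ∧ ∀ y : ℝ, |y - x| ≤ η →
      |Gop p lam d r a mu V y - Gop p lam d r a mu V x| ≤ eps := by
  have ha : 0 < a := hr.trans hra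
  set T : ℝ := x + 1 with hT
  set em : ℝ := min (eps / (3 * (lam + d + 1))) (eps / (6 * (lam + 1))) with hem
  have hempos : 0 < em := lt_min (by positivity) (by positivity)
  have hcomp : IsCompact (Set.Icc (-(p / a)) T) := isCompact_Icc
  obtain ⟨du, hdu, hUC⟩ := Metric.uniformContinuousOn_iff.mp
    (hcomp.uniformContinuousOn_of_continuous (hV.cont.mono Set.Icc_subset_Ici_self)) em hempos
  have hbt : Tendsto V (𝓝[Set.Ici (-(p / a))] (-(p / a))) (𝓝 0) := by
    have h := hV.cont (-(p / a)) Set.self_mem_Ici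
    rw [ContinuousWithinAt, hV.boundary] at h
    exact h
  obtain ⟨db, hdb, hb⟩ := Metric.tendsto_nhdsWithin_nhds.mp hbt
    (eps / (6 * (lam + 1))) (by positivity)
  set η : ℝ := min (min (du / 2) (db / 2)) (min (min ((x + p / a) / 2) 1) (eps / (3 * a)))
    with hη
  have hηpos : 0 < η := by
    apply lt_min (lt_min (by positivity) (by positivity))
    apply lt_min (lt_min (by linarith) one_pos) (by positivity)
  have hη1 : η ≤ du / 2 := le_trans (min_le_left _ _) (min_le_left _ _)
  have hη2 : η ≤ db / 2 := le_trans (min_le_left _ _) (min_le_right _ _)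
  have hη3 : η ≤ (x + p / a) / 2 :=
    le_trans (min_le_right _ _) (le_trans (min_le_left _ _) (min_le_left _ _))
  have hη4 : η ≤ 1 :=
    le_trans (min_le_right _ _) (le_trans (min_le_left _ _) (min_le_right _ _))
  have hη5 : η ≤ eps / (3 * a) := le_trans (min_le_right _ _) (min_le_right _ _)
  refine ⟨η, hηpos, by linarith, hη4, ?_⟩
  intro y hy
  obtain ⟨hy1, hy2⟩ := abs_le.mp hy
  have hyβ : -(p / a) < y := by linarith
  have hyT : y ≤ T := by rw [hT]; linarith
  have hxT : x ≤ T := by rw [hT]; linarith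
  -- drift part
  have hdr : |drift p r a y - drift p r a x| ≤ eps / 3 := by
    have h1 := drift_lip (p := p) hr hra x y
    have h2 : a * |y - x| ≤ a * η := mul_le_mul_of_nonneg_left hy ha.le
    have h3 : a * η ≤ a * (eps / (3 * a)) := mul_le_mul_of_nonneg_left hη5 ha.le
    have h4 : a * (eps / (3 * a)) = eps / 3 := by field_simp
    linarith
  -- V part
  have hVp : |V y - V x| ≤ em := by
    have := hUC y ⟨hyβ.le, hyT⟩ x ⟨hx.le, hxT⟩
      (by rw [Real.dist_eq]; linarith)
    rw [Real.dist_eq] at this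
    exact this.le
  have hVp2 : (lam + d) * |V y - V x| ≤ eps / 3 := by
    have h1 : em ≤ eps / (3 * (lam + d + 1)) := min_le_left _ _
    have h2 : (lam + d) * |V y - V x| ≤ (lam + d) * (eps / (3 * (lam + d + 1))) := by
      apply mul_le_mul_of_nonneg_left (le_trans hVp h1) (by positivity)
    have h3 : (lam + d) * (eps / (3 * (lam + d + 1))) ≤ eps / 3 := by
      rw [← mul_div_assoc, div_le_div_iff₀ (by positivity) (by positivity)]
      nlinarith
    linarith
  -- I part
  have hIbnd : ∀ z w : ℝ, -(p / a) < z → z ≤ w → w ≤ T → w - z ≤ η →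
      |Iop p a mu V w - Iop p a mu V z| ≤ em + eps / (6 * (lam + 1)) := by
    intro z w hz hzw hwT hwz
    apply Iop_diff_bound hV.cont hV.nonneg hz hzw hwT hempos.le (by positivity)
    · intro s t hs ht hst
      have := hUC s hs t ht (by rw [Real.dist_eq]; linarith [abs_nonneg (s - t)])
      rw [Real.dist_eq] at this
      exact this.le
    · intro yy hyy1 hyy2
      have := hb (Set.mem_Ici.mpr hyy1)
        (by rw [Real.dist_eq]; rw [abs_of_nonneg (by linarith)]; linarith)
      rw [Real.dist_eq, sub_zero] at this
      calc V yy ≤ |V yy| := le_abs_self _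
        _ ≤ eps / (6 * (lam + 1)) := this.le
  have hIp : |Iop p a mu V y - Iop p a mu V x| ≤ em + eps / (6 * (lam + 1)) := by
    rcases le_total x y with hxy | hyx
    · exact hIbnd x y hx hxy hyT (by linarith)
    · rw [abs_sub_comm]
      exact hIbnd y x hyβ hyx hxT (by linarith)
  have hIp2 : lam * |Iop p a mu V y - Iop p a mu V x| ≤ eps / 3 := by
    have h1 : em ≤ eps / (6 * (lam + 1)) := min_le_right _ _
    have h2 : lam * |Iop p a mu V y - Iop p a mu V x| ≤ lam * (eps / (3 * (lam + 1))) := by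
      apply mul_le_mul_of_nonneg_left _ hlam.le
      have : em + eps / (6 * (lam + 1)) ≤ eps / (3 * (lam + 1)) := by
        rw [show eps / (3 * (lam + 1)) = eps / (6 * (lam + 1)) + eps / (6 * (lam + 1)) by
          field_simp; ring]
        linarith
      linarith
    have h3 : lam * (eps / (3 * (lam + 1))) ≤ eps / 3 := by
      rw [← mul_div_assoc, div_le_div_iff₀ (by positivity) (by positivity)]
      nlinarith
    linarith
  have heq : Gop p lam d r a mu V y - Gop p lam d r a mu V x =
      (drift p r a y - drift p r a x) + (-(lam + d)) * (V y - V x)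
      + lam * (Iop p a mu V y - Iop p a mu V x) := by
    unfold Gop; ring
  rw [heq]
  calc |(drift p r a y - drift p r a x) + (-(lam + d)) * (V y - V x)
      + lam * (Iop p a mu V y - Iop p a mu V x)|
      ≤ |drift p r a y - drift p r a x| + |(-(lam + d)) * (V y - V x)|
        + |lam * (Iop p a mu V y - Iop p a mu V x)| := abs_add_three _ _ _
    _ ≤ eps / 3 + eps / 3 + eps / 3 := by
        rw [abs_mul, abs_mul, abs_neg, abs_of_pos (by linarith : (0:ℝ) < lam + d),
          abs_of_pos hlam]
        exact add_le_add (add_le_add hdr hVp2) hIp2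
    _ = eps := by ring

lemma no_touch_above {p lam d r a : ℝ} {mu : Measure ℝ} {V : ℝ → ℝ}
    (hp : 0 < p) (hlam : 0 < lam) (hd : 0 < d) (hr : 0 < r) (hra : r < a) (hrd : r < d)
    (hV : IsCandidate p lam d r a mu V) {w q ρ : ℝ} (hw : -(p / a) < w) (hq : 1 < q)
    (hL : drift p r a w * (q - 1) + Gop p lam d r a mu V w < 0) (hρ : 0 < ρ)
    (hloc : ∀ y ∈ Set.Icc (w - ρ) (w + ρ), V y ≤ V w + q * (y - w)) : False := by
  have ha : 0 < a := hr.trans hra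
  have hdr : 0 < d - r := by linarith
  set C1 : ℝ := d / (d - r) with hC1
  set C2 : ℝ := p / (d - r) + p / a + (d / (d - r)) * (p / a) with hC2
  have hC1nn : 0 ≤ C1 := le_of_lt (div_pos hd hdr)
  have hGB0 := candidate_linear_bound hp hd hr hra hrd hV
  have hGB : ∀ y, -(p / a) ≤ y → V y ≤ C1 * y + C2 := fun y hy => by
    rw [hC1, hC2]; exact hGB0 y hy
  have hD : 0 ≤ C1 * w + C2 - V w := by
    have := hGB w hw.le
    linarith
  set D : ℝ := C1 * w + C2 - V w with hDdef
  set A : ℝ := (C1 + q) / ρ + D / ρ ^ 2 with hA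
  have hAnn : 0 ≤ A := by positivity
  clear_value C1 C2 D A
  set φ : ℝ → ℝ := fun y => V w + (q * (y - w) + A * (y - w) ^ 2) with hφ
  have hφc : ContDiff ℝ 1 φ := by
    have h1 : ContDiff ℝ 1 (fun y : ℝ => y - w) := contDiff_id.sub contDiff_const
    exact contDiff_const.add ((contDiff_const.mul h1).add (contDiff_const.mul (h1.pow 2)))
  have hd1 : HasDerivAt (fun y : ℝ => y - w) 1 w := (hasDerivAt_id w).sub_const w
  have hd2 : HasDerivAt (fun y : ℝ => (y - w) ^ 2) (↑2 * (w - w) ^ (2 - 1) * 1) w := hd1.pow 2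
  have hd3 : HasDerivAt φ (0 + (q * 1 + A * (↑2 * (w - w) ^ (2 - 1) * 1))) w :=
    (hasDerivAt_const w (V w)).add ((hd1.const_mul q).add (hd2.const_mul A))
  have hderiv : deriv φ w = q := by
    rw [hd3.deriv]
    norm_num
  have hφw : φ w = V w := by
    rw [hφ]
    norm_num
  have hmax : ∀ y ∈ Set.Ici (-(p / a)), V y - φ y ≤ V w - φ w := by
    intro y hy
    rw [hφw]
    simp only [sub_self]
    rw [sub_nonpos]
    rcases le_or_gt |y - w| ρ with hc | hc
    · obtain ⟨hc1, hc2⟩ := abs_le.mp hc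
      have := hloc y ⟨by linarith, by linarith⟩
      have hsq : 0 ≤ A * (y - w) ^ 2 := mul_nonneg hAnn (sq_nonneg _)
      rw [hφ]
      simp only
      linarith
    · have hVy := hGB y hy
      rw [hφ]
      simp only
      have habs : ρ * |y - w| ≤ (y - w) ^ 2 := by
        rw [← sq_abs]
        nlinarith [abs_nonneg (y - w)]
      have hkey : (C1 + q) * |y - w| + D ≤ A * (y - w) ^ 2 := by
        have h1 : (C1 + q) / ρ * (y - w) ^ 2 ≥ (C1 + q) * |y - w| := by
          rw [ge_iff_le, div_mul_eq_mul_div, le_div_iff₀ hρ]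
          calc (C1 + q) * |y - w| * ρ = (C1 + q) * (ρ * |y - w|) := by ring
            _ ≤ (C1 + q) * (y - w) ^ 2 := by
                apply mul_le_mul_of_nonneg_left habs (by linarith)
        have h2 : D / ρ ^ 2 * (y - w) ^ 2 ≥ D := by
          rw [ge_iff_le, div_mul_eq_mul_div, le_div_iff₀ (by positivity)]
          have hsq2 : ρ ^ 2 ≤ (y - w) ^ 2 := by
            nlinarith [sq_abs (y - w), mul_self_le_mul_self hρ.le hc.le]
          nlinarith
        calc (C1 + q) * |y - w| + D
            ≤ (C1 + q) / ρ * (y - w) ^ 2 + D / ρ ^ 2 * (y - w) ^ 2 := add_le_add h1 h2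
          _ = A * (y - w) ^ 2 := by rw [hA]; ring
      have hs1 : y - w ≤ |y - w| := le_abs_self _
      have hs2 : -(y - w) ≤ |y - w| := neg_le_abs _
      have h5a : C1 * (y - w) ≤ C1 * |y - w| := mul_le_mul_of_nonneg_left hs1 hC1nn
      have h5b : q * -(y - w) ≤ q * |y - w| :=
        mul_le_mul_of_nonneg_left hs2 (le_of_lt (lt_trans one_pos hq))
      have h5 : C1 * (y - w) - q * (y - w) ≤ (C1 + q) * |y - w| := by ring_nf; linarith
      have hexp : C1 * y + C2 = V w + D + C1 * (y - w) := by
        rw [hDdef]; ring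
      linarith
  have hsub := hV.visc.1 w hw φ hφc hφw hmax
  rw [hderiv] at hsub
  have hLφ : Lphi p lam d r a mu V φ w = Gop p lam d r a mu V w + drift p r a w * (q - 1) := by
    unfold Lphi Gop
    rw [hderiv]
    ring
  rw [hLφ] at hsub
  have : max (1 - q) (Gop p lam d r a mu V w + drift p r a w * (q - 1)) < 0 :=
    max_lt (by linarith) (by linarith)
  linarith [this]

-- AUXMORE

set_option maxHeartbeats 1000000 in
theorem stmt17
    (p lam d r a : ℝ) (hp : 0 < p) (hlam : 0 < lam) (hd : 0 < d)
    (hr : 0 < r) (hra : r < a) (hrd : r < d)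
    (mu : Measure ℝ) [IsProbabilityMeasure mu] (hmu : mu (Set.Iic 0) = 0)
    (V : ℝ → ℝ) (hV : IsCandidate p lam d r a mu V) :
    ∀ x ∈ setC p lam d r a mu V,
      ∃ h : ℝ, 0 < h ∧ Set.Ico x (x + h) ⊆ setC p lam d r a mu V := by
    intro x hxC
    obtain ⟨hxI, hxAB⟩ := hxC
    have ha : 0 < a := hr.trans hra
    have hba : 0 < p / a := div_pos hp ha
    have hxgt : -(p / a) < x := by
      rcases lt_or_eq_of_le (Set.mem_Ici.mp hxI) with h | h
      · exact h
      · exact absurd (Or.inl ⟨hxI, by rw [← h]; exact Gop_boundary hp hr hra hV⟩) hxAB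
    have hGle : Gop p lam d r a mu V x ≤ 0 := Gop_nonpos hp hr hra hV hxgt
    have hGne : Gop p lam d r a mu V x ≠ 0 := fun h => hxAB (Or.inl ⟨hxI, h⟩)
    have hGneg : Gop p lam d r a mu V x < 0 := lt_of_le_of_ne hGle hGne
    set ε0 : ℝ := -(Gop p lam d r a mu V x) with hε0
    have hε0pos : 0 < ε0 := by rw [hε0]; linarith
    obtain ⟨η1, hη1pos, hη1b, hη1le1, hη1⟩ :=
      Gop_near hp hlam hd hr hra hV hxgt (show 0 < ε0 / 4 by positivity)
    set Cmax : ℝ := p + a * (|x| + 1) with hCm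
    have hCmpos : 0 < Cmax := by positivity
    have hdrb : ∀ w : ℝ, |w - x| ≤ 1 → drift p r a w ≤ Cmax := by
      intro w hw
      have h1 := drift_le_abs (p := p) hr hra w
      have h2 : |w| ≤ |x| + 1 := by
        have := abs_sub_abs_le_abs_sub w x
        linarith
      have h3 : a * |w| ≤ a * (|x| + 1) := mul_le_mul_of_nonneg_left h2 ha.le
      rw [hCm]
      linarith
    set Q : ℝ := 1 + ε0 / (4 * Cmax) with hQ
    have hQ1 : 1 < Q := by
      rw [hQ]
      have : 0 < ε0 / (4 * Cmax) := by positivity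
      linarith
    have hGw : ∀ w : ℝ, |w - x| ≤ η1 → Gop p lam d r a mu V w ≤ -(3 / 4) * ε0 := by
      intro w hw
      have h := abs_le.mp (hη1 w hw)
      have hx' : Gop p lam d r a mu V x = -ε0 := by rw [hε0]; ring
      linarith [h.2]
    clear_value ε0 Cmax Q
    have KILL : ∀ q : ℝ, 1 < q → q ≤ Q → ∀ w : ℝ, x - η1 < w → w < x + η1 →
        ∀ ρ : ℝ, 0 < ρ →
        (∀ y ∈ Set.Icc (w - ρ) (w + ρ), V y ≤ V w + q * (y - w)) → False := by
      intro q hq hqQ w hw1 hw2 ρ hρ hloc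
      have hwx : |w - x| ≤ η1 := abs_le.mpr ⟨by linarith, by linarith⟩
      have hwβ : -(p / a) < w := by linarith
      have hdw : drift p r a w ≤ Cmax := hdrb w (le_trans hwx hη1le1)
      have hG := hGw w hwx
      have hL : drift p r a w * (q - 1) + Gop p lam d r a mu V w < 0 := by
        have hq1 : drift p r a w * (q - 1) ≤ Cmax * (q - 1) :=
          mul_le_mul_of_nonneg_right hdw (by linarith)
        have hq2 : Cmax * (q - 1) ≤ Cmax * (Q - 1) :=
          mul_le_mul_of_nonneg_left (by linarith) hCmpos.le
        have hq3 : Cmax * (Q - 1) = ε0 / 4 := by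
          rw [hQ]
          have hne : Cmax ≠ 0 := ne_of_gt hCmpos
          field_simp
          ring
        linarith
      exact no_touch_above hp hlam hd hr hra hrd hV hwβ hq hL hρ hloc
    refine ⟨η1, hη1pos, ?_⟩
    intro y hy
    obtain ⟨hy1, hy2⟩ := hy
    have hyI : y ∈ Set.Ici (-(p / a)) := le_trans hxI hy1
    refine ⟨hyI, ?_⟩
    intro hyAB
    have hyx : |y - x| ≤ η1 := abs_le.mpr ⟨by linarith, by linarith⟩
    rcases hyAB with hyA | hyB
    · have h := hGw y hyx
      rw [hyA.2] at h
      linarith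
    · obtain ⟨-, hydiff, hyderiv, -⟩ := hyB
      rcases eq_or_lt_of_le hy1 with heq | hlt
      · exact hxAB (Or.inr ⟨hxI, by rw [heq]; exact hydiff, by rw [heq]; exact hyderiv, hGneg⟩)
      · have hVy1 : HasDerivAt V 1 y := by
          have h := hydiff.hasDerivAt
          rwa [hyderiv] at h
        have MAXL : ∀ q : ℝ, 1 < q → q ≤ Q → ∀ u : ℝ, x - η1 < u → u < y →
            ∀ z ∈ Set.Icc u y, V z - q * z ≤ V u - q * u := by
          intro q hq hqQ u hu1 hu2 z hz
          have hcont : ContinuousOn (fun t => V t - q * t) (Set.Icc u y) := by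
            apply ContinuousOn.sub
            · apply hV.cont.mono
              intro t ht
              simp only [Set.mem_Ici]
              have h1 := ht.1
              linarith [hη1b]
            · exact (continuous_const.mul continuous_id).continuousOn
          obtain ⟨w, hwmem, hwmax⟩ := isCompact_Icc.exists_isMaxOn
            (Set.nonempty_Icc.mpr (le_of_lt hu2)) hcont
          rcases eq_or_lt_of_le hwmem.2 with hwy | hwlt
          · exfalso
            rw [hwy] at hwmax
            have htl : Tendsto (slope V y) (nhdsWithin y (Set.Iio y)) (nhds 1) :=
              (hasDerivAt_iff_tendsto_slope.mp hVy1).mono_left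
                (nhdsWithin_mono y (fun t ht => ne_of_lt ht))
            have hev : ∀ᶠ t in nhdsWithin y (Set.Iio y), q ≤ slope V y t := by
              filter_upwards [Ioo_mem_nhdsLT_of_mem
                (show y ∈ Set.Ioc u y from ⟨hu2, le_rfl⟩)] with t ht
              have h1 : V t - q * t ≤ V y - q * y :=
                hwmax (Set.mem_Icc.mpr ⟨ht.1.le, ht.2.le⟩)
              rw [slope_def_field, le_div_iff_of_neg (show t - y < 0 by linarith [ht.2])]
              linarith
            have : q ≤ 1 := ge_of_tendsto htl hev
            linarith
          · rcases eq_or_lt_of_le hwmem.1 with hwu | hugt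
            · have h : V z - q * z ≤ V w - q * w := hwmax hz
              rw [← hwu] at h
              exact h
            · exfalso
              set ρ : ℝ := min (w - u) (y - w) with hρdef
              have hρ1 : ρ ≤ w - u := min_le_left _ _
              have hρ2 : ρ ≤ y - w := min_le_right _ _
              have hρpos : 0 < ρ := lt_min (by linarith) (by linarith)
              apply KILL q hq hqQ w (by linarith) (by linarith) ρ hρpos
              intro t ht
              have htm : t ∈ Set.Icc u y := ⟨by linarith [ht.1], by linarith [ht.2]⟩
              have h : V t - q * t ≤ V w - q * w := hwmax htm
              linarith
        have hEQ : ∀ z ∈ Set.Ioo (x - η1) y, V z = V x + (z - x) := by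
          intro z hz
          rcases le_or_gt x z with hxz | hzx
          · have hub : ∀ q : ℝ, 1 < q → q ≤ Q → V z - V x ≤ q * (z - x) := by
              intro q hq hqQ
              have h := MAXL q hq hqQ x (by linarith) hlt z ⟨hxz, hz.2.le⟩
              linarith
            have hlb : z - x ≤ V z - V x := hV.slope x z hxI hxz
            have hup : V z - V x ≤ z - x := by
              rcases eq_or_lt_of_le hxz with h | hxz'
              · rw [← h]; linarith
              by_contra hcon
              push_neg at hcon
              set e : ℝ := V z - V x - (z - x) with he
              have hepos : 0 < e := by linarith
              have hzx' : 0 < z - x := by linarith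
              set q : ℝ := min Q (1 + e / (2 * (z - x))) with hqdef
              have hq1 : 1 < q := lt_min hQ1
                (by have : 0 < e / (2 * (z - x)) := div_pos hepos (by linarith); linarith)
              have h3 := hub q hq1 (min_le_left _ _)
              have h4 : q - 1 ≤ e / (2 * (z - x)) := by
                have := min_le_right Q (1 + e / (2 * (z - x)))
                rw [hqdef]; linarith [this]
              have h7 : (q - 1) * (z - x) ≤ e / 2 := by
                have h6 := mul_le_mul_of_nonneg_right h4 hzx'.le
                calc (q - 1) * (z - x) ≤ e / (2 * (z - x)) * (z - x) := h6
                  _ = e / 2 := by field_simp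
              nlinarith [h3, h7]
            linarith
          · have hzI : -(p / a) ≤ z := by linarith [hη1b, hz.1]
            have hub : ∀ q : ℝ, 1 < q → q ≤ Q → q * (z - x) ≤ V z - V x := by
              intro q hq hqQ
              have h := MAXL q hq hqQ z hz.1 (by linarith) x ⟨hzx.le, hlt.le⟩
              linarith
            have hlb : V z - V x ≤ z - x := by
              have := hV.slope z x hzI hzx.le
              linarith
            have hup : z - x ≤ V z - V x := by
              by_contra hcon
              push_neg at hcon
              set e : ℝ := (z - x) - (V z - V x) with he
              have hepos : 0 < e := by linarith
              have hxz' : 0 < x - z := by linarith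
              set q : ℝ := min Q (1 + e / (2 * (x - z))) with hqdef
              have hq1 : 1 < q := lt_min hQ1
                (by have : 0 < e / (2 * (x - z)) := div_pos hepos (by linarith); linarith)
              have h3 := hub q hq1 (min_le_left _ _)
              have h4 : q - 1 ≤ e / (2 * (x - z)) := by
                have := min_le_right Q (1 + e / (2 * (x - z)))
                rw [hqdef]; linarith [this]
              have h7 : (q - 1) * (x - z) ≤ e / 2 := by
                have h6 := mul_le_mul_of_nonneg_right h4 hxz'.le
                calc (q - 1) * (x - z) ≤ e / (2 * (x - z)) * (x - z) := h6
                  _ = e / 2 := by field_simp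
              nlinarith [h3, h7]
            linarith
        have hlin : V =ᶠ[nhds x] fun z => V x + (z - x) := by
          have hmem : Set.Ioo (x - η1) y ∈ nhds x := Ioo_mem_nhds (by linarith) hlt
          filter_upwards [hmem] with z hz
          exact hEQ z hz
        have hdx : HasDerivAt V 1 x := by
          have hlinderiv : HasDerivAt (fun z : ℝ => V x + (z - x)) 1 x :=
            ((hasDerivAt_id x).sub_const x).const_add (V x)
          exact hlinderiv.congr_of_eventuallyEq hlin
        exact hxAB (Or.inr ⟨hxI, hdx.differentiableAt, hdx.deriv, hGneg⟩)
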